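/- arXiv:1406.6599 — 4 statements merged into one kernel-verified Lean document; each statement's English description precedes it below -/
import Mathlib

section
/- Let P = {p_1, …, p_n} ⊆ ℝ^2 be points in general position, with each p_i independently present with probability π_i ∈ (0,1], forming a random subset B. For a point q ∉ P, the probability that q ∉ conv(B) equals Pr[B = ∅] plus the sum over i of π_i · ∏_{p_j ∈ G_i} (1 − π_j), where G_i is the set of sites strictly to the right of the oriented line from q through p_i. -/
attribute [local instance] Classical.propDecidable

noncomputable section

abbrev E2 := EuclideanSpace ℝ (Fin 2)

/-- The 2D cross product. -/
def cross2 (a b : E2) : ℝ := a 0 * b 1 - a 1 * b 0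

/-- The probability of the outcome `B ⊆ P` in the unipoint model. -/
def outcomeProb (P : Finset E2) (π : E2 → ℝ) (B : Finset E2) : ℝ :=
  (∏ p ∈ B, π p) * ∏ p ∈ P \ B, (1 - π p)



lemma cross2_antisymm (a b : E2) : cross2 a b = - cross2 b a := by unfold cross2; ring

lemma cross2_self (a : E2) : cross2 a a = 0 := by unfold cross2; ring

lemma sum_coord (s : Finset E2) (w : E2 → ℝ) (v : E2 → E2) (i : Fin 2) :
    (∑ r ∈ s, w r • v r) i = ∑ r ∈ s, w r * (v r) i := by
  rw [WithLp.ofLp_sum, Finset.sum_apply]; simp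

lemma cross2_sum (a : E2) (s : Finset E2) (w : E2 → ℝ) (v : E2 → E2) :
    cross2 a (∑ r ∈ s, w r • v r) = ∑ r ∈ s, w r * cross2 a (v r) := by
  unfold cross2
  rw [sum_coord, sum_coord, Finset.mul_sum, Finset.mul_sum, ← Finset.sum_sub_distrib]
  exact Finset.sum_congr rfl fun r _ => by ring

lemma collinear_of_cross2_eq_zero {q p r : E2} (hpq : p ≠ q)
    (h : cross2 (p - q) (r - q) = 0) :
    Collinear ℝ ({q, p, r} : Set E2) := by
  rw [collinear_iff_of_mem (Set.mem_insert q _)]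
  refine ⟨p - q, ?_⟩
  intro x hx
  have ha : p - q ≠ 0 := sub_ne_zero.mpr hpq
  rcases hx with rfl | rfl | rfl
  · exact ⟨0, by simp⟩
  · exact ⟨1, by simp⟩
  · unfold cross2 at h
    simp only [PiLp.sub_apply] at h
    by_cases h0 : p 0 - q 0 = 0
    · have h1 : p 1 - q 1 ≠ 0 := by
        intro h1; apply ha; ext i; fin_cases i <;> simp [h0, h1] <;> linarith
      refine ⟨(x 1 - q 1) / (p 1 - q 1), ?_⟩
      have hb0 : x 0 - q 0 = 0 := by
        have h2 : (p 1 - q 1) * (x 0 - q 0) = 0 := by rw [h0] at h; linarith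
        rcases mul_eq_zero.mp h2 with hc | hc
        · exact absurd hc h1
        · exact hc
      have hxq : x - q = ((x 1 - q 1) / (p 1 - q 1)) • (p - q) := by
        ext i; fin_cases i <;> simp
        · rw [h0, mul_zero]; linarith
        · rw [div_mul_eq_mul_div, mul_div_assoc, div_self h1, mul_one]
      have hx : x = ((x 1 - q 1) / (p 1 - q 1)) • (p - q) + q := by
        rw [← hxq]; abel
      simpa using hx
    · refine ⟨(x 0 - q 0) / (p 0 - q 0), ?_⟩
      have hxq : x - q = ((x 0 - q 0) / (p 0 - q 0)) • (p - q) := by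
        ext i; fin_cases i <;> simp
        · rw [div_mul_eq_mul_div, mul_div_assoc, div_self h0, mul_one]
        · rw [div_mul_eq_mul_div, eq_div_iff h0]; linear_combination h
      have hx : x = ((x 0 - q 0) / (p 0 - q 0)) • (p - q) + q := by
        rw [← hxq]; abel
      simpa using hx

lemma not_mem_hull_of_witness {q p : E2} {B : Finset E2} (hp : p ∈ B) (hqp : q ≠ p)
    (hw : ∀ r ∈ B, r ≠ p → 0 < cross2 (p - q) (r - q)) :
    q ∉ convexHull ℝ (B : Set E2) := by
  intro hq
  rw [Finset.convexHull_eq] at hq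
  obtain ⟨w, hw0, hw1, hcm⟩ := hq
  rw [Finset.centerMass_eq_of_sum_1 _ _ hw1] at hcm
  simp only [id] at hcm
  have key : ∑ r ∈ B, w r * cross2 (p - q) (r - q) = 0 := by
    rw [← cross2_sum]
    have e : ∑ r ∈ B, w r • (r - q) = 0 := by
      have e1 : ∑ r ∈ B, w r • (r - q) = (∑ r ∈ B, w r • r) - (∑ r ∈ B, w r) • q := by
        rw [Finset.sum_smul, ← Finset.sum_sub_distrib]
        exact Finset.sum_congr rfl fun r _ => smul_sub (w r) r q
      rw [e1, hw1, one_smul, hcm, sub_self]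
    rw [e]; unfold cross2; simp
  have hnn : ∀ r ∈ B, 0 ≤ w r * cross2 (p - q) (r - q) := by
    intro r hr
    rcases eq_or_ne r p with rfl | hrp
    · rw [cross2_self]; simp
    · exact mul_nonneg (hw0 r hr) (le_of_lt (hw r hr hrp))
  have hz := (Finset.sum_eq_zero_iff_of_nonneg hnn).mp key
  have hwz : ∀ r ∈ B, r ≠ p → w r = 0 := by
    intro r hr hrp
    rcases mul_eq_zero.mp (hz r hr) with h | h
    · exact h
    · exact absurd h (ne_of_gt (hw r hr hrp))
  have hq1 : w p = 1 := by
    rw [← hw1]; symm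
    apply Finset.sum_eq_single p (fun r hr hrp => hwz r hr hrp) (fun h => absurd hp h)
  have hqp' : q = p := by
    rw [← hcm]
    rw [Finset.sum_eq_single p (fun r hr hrp => by rw [hwz r hr hrp, zero_smul])
      (fun h => absurd hp h), hq1, one_smul]
  exact hqp hqp'

lemma exists_witness {q : E2} {B : Finset E2} (hB : B.Nonempty)
    (hq : q ∉ convexHull ℝ (B : Set E2))
    (hnc : ∀ p ∈ B, ∀ r ∈ B, p ≠ r → cross2 (p - q) (r - q) ≠ 0) :
    ∃ p ∈ B, ∀ r ∈ B, r ≠ p → 0 < cross2 (p - q) (r - q) := by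
  obtain ⟨f, u, hfq, hfb⟩ := geometric_hahn_banach_point_closed
    (convex_convexHull ℝ _) ((B.finite_toSet.isCompact_convexHull ℝ).isClosed) hq
  set c0 := f (EuclideanSpace.single 0 1) with hc0
  set c1 := f (EuclideanSpace.single 1 1) with hc1
  have hf : ∀ x : E2, f x = c0 * x 0 + c1 * x 1 := by
    intro x
    have hx : x = x 0 • EuclideanSpace.single (0 : Fin 2) (1:ℝ)
        + x 1 • EuclideanSpace.single (1 : Fin 2) (1:ℝ) := by
      ext i; fin_cases i <;> simp [EuclideanSpace.single_apply]
    conv_lhs => rw [hx]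
    rw [map_add, map_smul, map_smul]
    simp [hc0, hc1, mul_comm]
  have hL : ∀ r ∈ B, 0 < c0 * (r - q) 0 + c1 * (r - q) 1 := by
    intro r hr
    have h1 : u < f r := hfb r (subset_convexHull ℝ _ (by exact_mod_cast hr))
    have h2 : 0 < f (r - q) := by rw [map_sub]; linarith
    rw [hf] at h2; exact h2
  obtain ⟨p, hp, hmin⟩ := B.exists_min_image
    (fun r => (c0 * (r - q) 1 - c1 * (r - q) 0) / (c0 * (r - q) 0 + c1 * (r - q) 1)) hB
  refine ⟨p, hp, fun r hr hrp => ?_⟩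
  have hLp := hL p hp
  have hLr := hL r hr
  have hcc : 0 < c0^2 + c1^2 := by
    rcases eq_or_ne c0 0 with h₀ | h₀
    · rcases eq_or_ne c1 0 with h₁ | h₁
      · exfalso; rw [h₀, h₁] at hLp; simp at hLp
      · positivity
    · positivity
  have hdiv := hmin r hr
  simp only at hdiv
  rw [div_le_div_iff₀ hLp hLr] at hdiv
  have hid : (c0^2 + c1^2) * cross2 (p - q) (r - q)
      = (c0 * (p - q) 0 + c1 * (p - q) 1) * (c0 * (r - q) 1 - c1 * (r - q) 0)
        - (c0 * (r - q) 0 + c1 * (r - q) 1) * (c0 * (p - q) 1 - c1 * (p - q) 0) := by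
    unfold cross2; simp only [PiLp.sub_apply]; ring
  have h0 : 0 ≤ cross2 (p - q) (r - q) := by nlinarith [hid, hdiv, hcc]
  exact lt_of_le_of_ne h0 (Ne.symm (hnc p hp r hr (Ne.symm hrp)))

/-- Decomposition of the probability that `q ∉ conv(B)`: it equals the probability
that `B = ∅` plus, for each site `p i`, the probability that `q pᵢ` is the witness
edge, namely `πᵢ · ∏_{p_j ∈ G_i} (1 - π_j)` where `G_i` is the set of sites strictly
to the right of the oriented line from `q` through `pᵢ`. -/
theorem prob_not_in_hull_eq (P : Finset E2) (π : E2 → ℝ)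
    (hπ : ∀ p ∈ P, π p ∈ Set.Ioc (0 : ℝ) 1)
    (q : E2) (hqP : q ∉ P)
    (hgp : ∀ x y z : E2, x ∈ insert q (↑P : Set E2) → y ∈ insert q (↑P : Set E2) →
      z ∈ insert q (↑P : Set E2) → x ≠ y → x ≠ z → y ≠ z →
      ¬ Collinear ℝ ({x, y, z} : Set E2)) :
    (∑ B ∈ P.powerset,
        if q ∉ convexHull ℝ (B : Set E2) then outcomeProb P π B else 0) =
      outcomeProb P π ∅ +
        ∑ p ∈ P, π p *
          ∏ r ∈ P.filter (fun r => cross2 (p - q) (r - q) < 0), (1 - π r) := by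
  classical
  have hcr : ∀ p ∈ P, ∀ r ∈ P, p ≠ r → cross2 (p - q) (r - q) ≠ 0 := by
    intro p hp r hr hpr h
    have hqp : q ≠ p := fun e => hqP (e ▸ hp)
    have hqr : q ≠ r := fun e => hqP (e ▸ hr)
    exact hgp q p r (Set.mem_insert _ _) (Set.mem_insert_of_mem _ hp)
      (Set.mem_insert_of_mem _ hr) hqp hqr hpr
      (collinear_of_cross2_eq_zero (Ne.symm hqp) h)
  have step : ∀ B ∈ P.powerset,
      (if q ∉ convexHull ℝ (B : Set E2) then outcomeProb P π B else 0)
      = (if B = (∅ : Finset E2) then outcomeProb P π ∅ else 0)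
        + ∑ p ∈ P, (if p ∈ B ∧ ∀ r ∈ B, r ≠ p → 0 < cross2 (p - q) (r - q)
            then outcomeProb P π B else 0) := by
    intro B hB
    rw [Finset.mem_powerset] at hB
    rcases eq_or_ne B ∅ with rfl | hBne
    · simp
    · rw [if_neg hBne, zero_add]
      by_cases hq : q ∉ convexHull ℝ (B : Set E2)
      · rw [if_pos hq]
        obtain ⟨p₀, hp₀, hw₀⟩ := exists_witness (Finset.nonempty_of_ne_empty hBne) hq
            (fun p hp r hr => hcr p (hB hp) r (hB hr))
        rw [Finset.sum_eq_single p₀ ?_ ?_]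
        · rw [if_pos ⟨hp₀, hw₀⟩]
        · intro p _ hne
          rw [if_neg]
          rintro ⟨hpB, hwp⟩
          have h1 := hw₀ p hpB hne
          have h2 := hwp p₀ hp₀ (Ne.symm hne)
          have h3 := cross2_antisymm (p₀ - q) (p - q)
          linarith
        · intro hp; exact absurd (hB hp₀) hp
      · rw [if_neg hq]
        symm; apply Finset.sum_eq_zero
        intro p _
        rw [if_neg]
        rintro ⟨hpB, hwp⟩
        exact hq (not_mem_hull_of_witness hpB (fun e => hqP (e ▸ hB hpB)) hwp)
  rw [Finset.sum_congr rfl step, Finset.sum_add_distrib]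
  congr 1
  · rw [Finset.sum_ite_eq' P.powerset (∅ : Finset E2) (fun _ => outcomeProb P π ∅)]
    simp
  · rw [Finset.sum_comm]
    apply Finset.sum_congr rfl
    intro p hp
    set Lp := P.filter (fun r => 0 < cross2 (p - q) (r - q)) with hLp
    set Gp := P.filter (fun r => cross2 (p - q) (r - q) < 0) with hGp
    have hpLp : p ∉ Lp := by
      simp only [hLp, Finset.mem_filter]
      rintro ⟨-, h⟩; rw [cross2_self] at h; exact lt_irrefl 0 h
    have hpGp : p ∉ Gp := by
      simp only [hGp, Finset.mem_filter]
      rintro ⟨-, h⟩; rw [cross2_self] at h; exact lt_irrefl 0 h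
    have himg : P.powerset.filter
        (fun B => p ∈ B ∧ ∀ r ∈ B, r ≠ p → 0 < cross2 (p - q) (r - q))
        = Lp.powerset.image (insert p) := by
      ext B
      simp only [Finset.mem_filter, Finset.mem_powerset, Finset.mem_image]
      constructor
      · rintro ⟨hBP, hpB, hwB⟩
        refine ⟨B.erase p, ?_, ?_⟩
        · intro r hr
          have hr' := Finset.mem_of_mem_erase hr
          have hrp := Finset.ne_of_mem_erase hr
          rw [hLp, Finset.mem_filter]
          exact ⟨hBP hr', hwB r hr' hrp⟩
        · exact Finset.insert_erase hpB
      · rintro ⟨S, hS, rfl⟩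
        have hSP : S ⊆ P := hS.trans (Finset.filter_subset _ _)
        refine ⟨Finset.insert_subset hp hSP, Finset.mem_insert_self _ _, ?_⟩
        intro r hr hrp
        rcases Finset.mem_insert.mp hr with rfl | hrS
        · exact absurd rfl hrp
        · have := hS hrS
          rw [hLp, Finset.mem_filter] at this
          exact this.2
    rw [← Finset.sum_filter, himg]
    rw [Finset.sum_image (fun S hS T hT hST => by
      rw [Finset.mem_coe, Finset.mem_powerset] at hS hT
      have hpS : p ∉ S := fun h => hpLp (hS h)
      have hpT : p ∉ T := fun h => hpLp (hT h)
      rw [← Finset.erase_insert hpS, ← Finset.erase_insert hpT, hST] )]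
    have hmemL : ∀ r, r ∈ Lp ↔ r ∈ P ∧ 0 < cross2 (p - q) (r - q) := fun r => by
      rw [hLp, Finset.mem_filter]
    have hmemG : ∀ r, r ∈ Gp ↔ r ∈ P ∧ cross2 (p - q) (r - q) < 0 := fun r => by
      rw [hGp, Finset.mem_filter]
    have hone : ∑ S ∈ Lp.powerset, (∏ r ∈ S, π r) * ∏ r ∈ Lp \ S, (1 - π r) = 1 := by
      rw [← Finset.prod_add]
      simp
    calc ∑ S ∈ Lp.powerset, outcomeProb P π (insert p S)
        = ∑ S ∈ Lp.powerset, (π p * ∏ r ∈ Gp, (1 - π r))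
            * ((∏ r ∈ S, π r) * ∏ r ∈ Lp \ S, (1 - π r)) := by
          apply Finset.sum_congr rfl
          intro S hS
          rw [Finset.mem_powerset] at hS
          have hpS : p ∉ S := fun h => hpLp (hS h)
          have hsetid : P \ insert p S = Gp ∪ (Lp \ S) := by
            ext r
            simp only [Finset.mem_sdiff, Finset.mem_union, Finset.mem_insert, not_or]
            constructor
            · rintro ⟨hrP, hrp, hrS⟩
              rcases lt_or_gt_of_ne (hcr p hp r hrP (fun e => hrp e.symm)) with hlt | hgt
              · exact Or.inl ((hmemG r).mpr ⟨hrP, hlt⟩)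
              · exact Or.inr ⟨(hmemL r).mpr ⟨hrP, hgt⟩, hrS⟩
            · rintro (hrG | ⟨hrL, hrS⟩)
              · obtain ⟨hrP, hlt⟩ := (hmemG r).mp hrG
                refine ⟨hrP, ?_, ?_⟩
                · rintro rfl; rw [cross2_self] at hlt; exact lt_irrefl 0 hlt
                · intro hrS
                  obtain ⟨-, hgt⟩ := (hmemL r).mp (hS hrS)
                  linarith
              · obtain ⟨hrP, hgt⟩ := (hmemL r).mp hrL
                refine ⟨hrP, ?_, hrS⟩
                rintro rfl; exact hpLp hrL
          have hdisj : Disjoint Gp (Lp \ S) := by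
            rw [Finset.disjoint_left]
            intro r hrG hrL
            obtain ⟨-, h1⟩ := (hmemG r).mp hrG
            obtain ⟨-, h2⟩ := (hmemL r).mp (Finset.mem_sdiff.mp hrL).1
            linarith
          rw [outcomeProb, Finset.prod_insert hpS, hsetid, Finset.prod_union hdisj]
          ring
      _ = π p * ∏ r ∈ Gp, (1 - π r) := by
          rw [← Finset.mul_sum, hone, mul_one]
end
end

section
/- Let p_1, …, p_n be the vertices of a regular n-gon in ℝ^2, each present independently with probability γ ∈ (0,1). Let f_1, f_2 be two faces (relatively open cells) of the arrangement of all segments p_i p_j with f_1 ⊆ ∂f_2. Then the membership probability satisfies μ(f_1) > μ(f_2), where μ(f) = Pr[x ∈ conv(B)] for any x ∈ f. -/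
attribute [local instance] Classical.propDecidable

noncomputable section

open Real

/-- Membership probability of `x` when each site of `P` is present independently
with probability `γ`. -/
def memProb (P : Finset E2) (γ : ℝ) (x : E2) : ℝ :=
  ∑ B ∈ P.powerset,
    if x ∈ convexHull ℝ (B : Set E2) then γ ^ B.card * (1 - γ) ^ (P.card - B.card) else 0

/-- A face of the arrangement: a maximal connected region on which membership in
`conv(S)` is constant for every `S ⊆ P`. -/
def IsFace (P : Finset E2) (F : Set E2) : Prop :=
  ∃ x : E2, F = connectedComponentIn
    {y : E2 | ∀ S ∈ P.powerset,
      (x ∈ convexHull ℝ (S : Set E2) ↔ y ∈ convexHull ℝ (S : Set E2))} x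

/-- For the vertices of a regular `n`-gon, each present independently with
probability `γ ∈ (0,1)`, the membership probability strictly decreases from a face
`f₁` of the arrangement to a face `f₂` whose boundary contains `f₁`. -/
theorem ngon_membership_strict_mono
    (n : ℕ) (hn : 3 ≤ n) (γ : ℝ) (hγ : γ ∈ Set.Ioo (0 : ℝ) 1)
    (p : Fin n → E2)
    (hp : ∀ k : Fin n, p k =
      (WithLp.toLp 2 (fun j : Fin 2 => if j = 0 then Real.cos (2 * π * k / n)
        else Real.sin (2 * π * k / n)) : E2))
    (P : Finset E2) (hP : P = Finset.image p Finset.univ)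
    (f₁ f₂ : Set E2) (hf₁ : IsFace P f₁) (hf₂ : IsFace P f₂)
    (hbd : f₁ ⊆ frontier f₂) (hne : f₁ ≠ f₂)
    (x₁ : E2) (hx₁ : x₁ ∈ f₁) (x₂ : E2) (hx₂ : x₂ ∈ f₂) :
    memProb P γ x₂ < memProb P γ x₁ := by
  obtain ⟨hγ0, hγ1⟩ := hγ
  obtain ⟨w₁, hw₁⟩ := hf₁
  obtain ⟨w₂, hw₂⟩ := hf₂
  set A₁ : Set E2 := {y : E2 | ∀ S ∈ P.powerset,
      (w₁ ∈ convexHull ℝ (S : Set E2) ↔ y ∈ convexHull ℝ (S : Set E2))} with hA₁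
  set A₂ : Set E2 := {y : E2 | ∀ S ∈ P.powerset,
      (w₂ ∈ convexHull ℝ (S : Set E2) ↔ y ∈ convexHull ℝ (S : Set E2))} with hA₂
  have hf₁A : f₁ ⊆ A₁ := hw₁ ▸ connectedComponentIn_subset _ _
  have hf₂A : f₂ ⊆ A₂ := hw₂ ▸ connectedComponentIn_subset _ _
  have hx₁A : x₁ ∈ A₁ := hf₁A hx₁
  have hx₂A : x₂ ∈ A₂ := hf₂A hx₂
  have hclosed : ∀ S : Finset E2, IsClosed (convexHull ℝ (S : Set E2)) := fun S =>
    (S.finite_toSet.isCompact_convexHull ℝ).isClosed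
  have hx₁cl : x₁ ∈ closure f₂ := (hbd hx₁).1
  -- monotonicity: anything containing x₂ contains x₁
  have key1 : ∀ S ∈ P.powerset, x₂ ∈ convexHull ℝ (S : Set E2) →
      x₁ ∈ convexHull ℝ (S : Set E2) := by
    intro S hS hx2S
    have hsub : f₂ ⊆ convexHull ℝ (S : Set E2) := fun y hy =>
      (hf₂A hy S hS).mp ((hx₂A S hS).mpr hx2S)
    exact closure_minimal hsub (hclosed S) hx₁cl
  -- existence of a strict separator
  have key2 : ∃ S ∈ P.powerset, x₁ ∈ convexHull ℝ (S : Set E2) ∧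
      x₂ ∉ convexHull ℝ (S : Set E2) := by
    by_contra hcon
    push_neg at hcon
    have hiff : ∀ S ∈ P.powerset,
        (x₁ ∈ convexHull ℝ (S : Set E2) ↔ x₂ ∈ convexHull ℝ (S : Set E2)) :=
      fun S hS => ⟨fun h => hcon S hS h, fun h => key1 S hS h⟩
    have hx₁A₂ : x₁ ∈ A₂ := fun S hS => (hx₂A S hS).trans (hiff S hS).symm
    have hpre : IsPreconnected f₂ := by
      rw [hw₂]; exact isPreconnected_connectedComponentIn
    have hins : IsPreconnected (insert x₁ f₂) :=
      hpre.subset_closure (Set.subset_insert _ _)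
        (Set.insert_subset hx₁cl subset_closure)
    have hsub2 : insert x₁ f₂ ⊆ connectedComponentIn A₂ x₂ :=
      hins.subset_connectedComponentIn (Set.mem_insert_of_mem _ hx₂)
        (Set.insert_subset hx₁A₂ hf₂A)
    have hcc : f₂ = connectedComponentIn A₂ x₂ := by
      rw [hw₂]; exact connectedComponentIn_eq (hw₂ ▸ hx₂)
    have hx₁f₂ : x₁ ∈ f₂ := by
      rw [hcc]; exact hsub2 (Set.mem_insert _ _)
    -- now show f₁ = f₂
    have hww : ∀ S ∈ P.powerset,
        (w₁ ∈ convexHull ℝ (S : Set E2) ↔ w₂ ∈ convexHull ℝ (S : Set E2)) :=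
      fun S hS => (hx₁A S hS).trans (hx₁A₂ S hS).symm
    have hAA : A₁ = A₂ := Set.ext fun y =>
      forall₂_congr fun S hS => iff_congr (hww S hS) Iff.rfl
    have hf₁eq : f₁ = connectedComponentIn A₂ x₁ := by
      rw [hw₁, ← hAA]
      exact connectedComponentIn_eq (hw₁ ▸ hx₁)
    have hf₂eq : f₂ = connectedComponentIn A₂ x₁ := by
      rw [hw₂]; exact connectedComponentIn_eq (hw₂ ▸ hx₁f₂)
    exact hne (hf₁eq.trans hf₂eq.symm)
  obtain ⟨S₀, hS₀P, hS₀x₁, hS₀x₂⟩ := key2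
  have hwpos : ∀ B : Finset E2, (0 : ℝ) < γ ^ B.card * (1 - γ) ^ (P.card - B.card) :=
    fun B => mul_pos (pow_pos hγ0 _) (pow_pos (by linarith) _)
  unfold memProb
  refine Finset.sum_lt_sum (fun B hB => ?_) ⟨S₀, hS₀P, ?_⟩
  · by_cases h2 : x₂ ∈ convexHull ℝ (B : Set E2)
    · rw [if_pos h2, if_pos (key1 B hB h2)]
    · rw [if_neg h2]
      split_ifs with h1
      · exact (hwpos B).le
      · exact le_refl 0
  · rw [if_neg hS₀x₂, if_pos hS₀x₁]
    exact hwpos S₀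
end
end

section
/- Let 𝒫 = {(P_1, Γ_1), …, (P_m, Γ_m)} be uncertain points in ℝ^2 in the multipoint model, and β ∈ [0,1]. Every minimal convex β-dense set C (i.e., a convex β-dense set containing no proper convex β-dense subset) equals the convex hull of C ∩ P, where P = ⋃ P_i; in particular C is a convex polygon with vertices in P. -/
attribute [local instance] Classical.propDecidable

noncomputable section

/-- `C` is a convex `β`-dense set for the multipoint uncertain points
`(P₁,Γ₁),…,(P_m,Γ_m)`: it is convex and contains at least a `β`-fraction of the
probability mass of each uncertain point. -/
def IsBetaDense (m : ℕ) (Pm : Fin m → Finset E2) (γ : Fin m → E2 → ℝ) (β : ℝ)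
    (C : Set E2) : Prop :=
  Convex ℝ C ∧ ∀ k : Fin m, β ≤ ∑ s ∈ (Pm k).filter (· ∈ C), γ k s

/-- A minimal convex `β`-dense set equals the convex hull of the sites it
contains; in particular it is a convex polygon with vertices among the sites. -/
theorem minimal_beta_dense_eq_hull
    (m : ℕ) (Pm : Fin m → Finset E2) (γ : Fin m → E2 → ℝ)
    (hγ : ∀ k, ∀ s ∈ Pm k, 0 < γ k s) (hsum : ∀ k, ∑ s ∈ Pm k, γ k s ≤ 1)
    (β : ℝ) (hβ : β ∈ Set.Icc (0 : ℝ) 1)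
    (Pall : Finset E2) (hPall : (Pall : Set E2) = ⋃ k : Fin m, (Pm k : Set E2))
    (C : Set E2) (hC : IsBetaDense m Pm γ β C)
    (hmin : ∀ C' : Set E2, C' ⊆ C → C' ≠ C → ¬ IsBetaDense m Pm γ β C') :
    C = convexHull ℝ (C ∩ (Pall : Set E2)) := by
  set C' := convexHull ℝ (C ∩ (Pall : Set E2)) with hC'
  have hsub : C' ⊆ C := by
    rw [hC']
    exact convexHull_min (Set.inter_subset_left) hC.1
  have hdense : IsBetaDense m Pm γ β C' := by
    refine ⟨convex_convexHull _ _, fun k => ?_⟩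
    have hfilt : (Pm k).filter (· ∈ C) = (Pm k).filter (· ∈ C') := by
      ext s
      simp only [Finset.mem_filter, and_congr_right_iff]
      intro hs
      constructor
      · intro hsC
        apply subset_convexHull
        refine ⟨hsC, ?_⟩
        rw [hPall]
        exact Set.mem_iUnion.2 ⟨k, hs⟩
      · intro hsC'
        exact hsub hsC'
    rw [← hfilt]
    exact hC.2 k
  by_contra hne
  exact hmin C' hsub (fun h => hne (h ▸ rfl)) hdense
end
end

section
/- Let 𝒫 be a set of m uncertain points in ℝ^2 in the multipoint model with a total of n sites P, and β ∈ [0,1]. The β-hull of 𝒫 (the intersection of all convex β-dense sets) is a convex polygon with at most 2n edges; more precisely, for each site p ∈ P, at most two lines supporting edges of the β-hull pass through p, and every edge-supporting line passes through two sites of P. -/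
open scoped RealInnerProductSpace
attribute [local instance] Classical.propDecidable

noncomputable section

/-- The `β`-hull: the intersection of all convex `β`-dense sets. -/
def betaHull (m : ℕ) (Pm : Fin m → Finset E2) (γ : Fin m → E2 → ℝ) (β : ℝ) : Set E2 :=
  ⋂₀ {C : Set E2 | IsBetaDense m Pm γ β C}

/-- `ℓ` is a line supporting an edge of the set `K`: a line bounding a closed
halfplane containing `K` and meeting `K` in at least two points. -/
def IsEdgeLine (K : Set E2) (ℓ : Set E2) : Prop :=
  (∃ v : E2, v ≠ 0 ∧ ∃ c : ℝ, ℓ = {x | ⟪v, x⟫ = c} ∧ K ⊆ {x | ⟪v, x⟫ ≤ c}) ∧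
  ∃ a ∈ ℓ ∩ K, ∃ b ∈ ℓ ∩ K, a ≠ b



lemma finrank_E2 : Module.finrank ℝ E2 = 2 := finrank_euclideanSpace_fin

lemma aux_span (W : Submodule ℝ E2) (hW : W ≠ ⊤) {d y : E2} (hd0 : d ≠ 0)
    (hd : d ∈ W) (hy : y ∈ W) : ∃ t : ℝ, y = t • d := by
  have hle : Submodule.span ℝ {d} ≤ W := by
    rw [Submodule.span_le, Set.singleton_subset_iff]; exact hd
  have h1 : Module.finrank ℝ (Submodule.span ℝ ({d} : Set E2)) = 1 :=
    finrank_span_singleton hd0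
  have h2 : Module.finrank ℝ W < 2 := by
    have := Submodule.finrank_lt (K := ℝ) (V := E2) hW
    rwa [finrank_E2] at this
  have heq : Submodule.span ℝ ({d} : Set E2) = W :=
    Submodule.eq_of_le_of_finrank_le hle (by omega)
  rw [← heq, Submodule.mem_span_singleton] at hy
  obtain ⟨t, ht⟩ := hy
  exact ⟨t, ht.symm⟩

lemma orth_indep {v w : E2} (h : LinearIndependent ℝ ![v, w]) {d : E2}
    (h1 : ⟪v, d⟫ = 0) (h2 : ⟪w, d⟫ = 0) : d = 0 := by
  have hsp : Submodule.span ℝ (Set.range ![v, w]) = ⊤ :=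
    h.span_eq_top_of_card_eq_finrank (by simp [finrank_E2])
  have hd : d ∈ Submodule.span ℝ ({v, w} : Set E2) := by
    have : Set.range ![v, w] = {v, w} := by
      ext x; simp [Matrix.range_cons, Matrix.range_empty, or_comm]
    rw [← this, hsp]; trivial
  rw [Submodule.mem_span_pair] at hd
  obtain ⟨s, t, hst⟩ := hd
  have h3 : ⟪d, d⟫ = ⟪s • v + t • w, d⟫ := by rw [hst]
  rw [inner_add_left, real_inner_smul_left, real_inner_smul_left, h1, h2,
    mul_zero, mul_zero, add_zero] at h3
  exact inner_self_eq_zero.mp h3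



lemma indep_of_lines {v w p : E2} {cv cw : ℝ} (hv : v ≠ 0) (hw : w ≠ 0)
    (hpv : ⟪v, p⟫ = cv) (hpw : ⟪w, p⟫ = cw)
    (hne : ({x : E2 | ⟪v, x⟫ = cv} : Set E2) ≠ {x : E2 | ⟪w, x⟫ = cw}) :
    LinearIndependent ℝ ![v, w] := by
  rw [LinearIndependent.pair_iff]
  intro s t hst
  by_contra hcon
  have hs : s ≠ 0 := by
    rintro rfl
    simp only [zero_smul, zero_add, smul_eq_zero] at hst
    rcases hst with h | h
    · exact hcon ⟨rfl, h⟩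
    · exact hw h
  have ht : t ≠ 0 := by
    rintro rfl
    simp only [add_zero, zero_smul, smul_eq_zero] at hst
    rcases hst with h | h
    · exact hcon ⟨h, rfl⟩
    · exact hv h
  have hvw : v = (-t / s) • w := by
    have : s • v = -(t • w) := by
      rw [eq_neg_iff_add_eq_zero]; exact hst
    have := congrArg (fun z => s⁻¹ • z) this
    simp only [smul_smul, inv_mul_cancel₀ hs, one_smul, smul_neg] at this
    rw [this, ← neg_smul]
    congr 1
    field_simp
  apply hne
  have hr : (-t / s) ≠ 0 := div_ne_zero (neg_ne_zero.mpr ht) hs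
  ext x
  simp only [Set.mem_setOf_eq]
  rw [hvw] at hpv ⊢
  rw [real_inner_smul_left] at hpv ⊢
  constructor
  · intro h; rw [← hpv] at h; exact mul_left_cancel₀ hr h ▸ hpw
  · intro h; rw [h, ← hpw, ← hpv]

lemma key3 {K : Set E2} {p v1 v2 v3 : E2} {c1 c2 c3 : ℝ}
    (hK1 : K ⊆ {x : E2 | ⟪v1, x⟫ ≤ c1}) (hK2 : K ⊆ {x : E2 | ⟪v2, x⟫ ≤ c2})
    (hp1 : ⟪v1, p⟫ = c1) (hp2 : ⟪v2, p⟫ = c2) (hp3 : ⟪v3, p⟫ = c3)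
    (hind : LinearIndependent ℝ ![v1, v2])
    {α β : ℝ} (hα : 0 < α) (hβ : 0 < β) (h3 : v3 = α • v1 + β • v2)
    {a b : E2} (ha : a ∈ K) (hb : b ∈ K) (ha3 : ⟪v3, a⟫ = c3) (hb3 : ⟪v3, b⟫ = c3)
    (hab : a ≠ b) : False := by
  have hinner : ∀ x : E2, ⟪v3, x⟫ = α * ⟪v1, x⟫ + β * ⟪v2, x⟫ := by
    intro x
    rw [h3, inner_add_left, real_inner_smul_left, real_inner_smul_left]
  have hc3 : c3 = α * c1 + β * c2 := by rw [← hp1, ← hp2, ← hp3, hinner]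
  have key : ∀ x ∈ K, ⟪v3, x⟫ = c3 → ⟪v1, x⟫ = c1 ∧ ⟪v2, x⟫ = c2 := by
    intro x hx h0
    have e1 : ⟪v1, x⟫ ≤ c1 := hK1 hx
    have e2 : ⟪v2, x⟫ ≤ c2 := hK2 hx
    have e3 : α * ⟪v1, x⟫ + β * ⟪v2, x⟫ = α * c1 + β * c2 := by
      rw [← hinner, h0, hc3]
    constructor <;> nlinarith
  obtain ⟨ea1, ea2⟩ := key a ha ha3
  obtain ⟨eb1, eb2⟩ := key b hb hb3
  have hd : b - a = 0 := by
    apply orth_indep hind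
    · rw [inner_sub_right, ea1, eb1, sub_self]
    · rw [inner_sub_right, ea2, eb2, sub_self]
  exact hab (sub_eq_zero.mp hd).symm

lemma atmost2 (K : Set E2) (p : E2) :
    {ℓ : Set E2 | IsEdgeLine K ℓ ∧ p ∈ ℓ}.encard ≤ 2 := by
  set S := {ℓ : Set E2 | IsEdgeLine K ℓ ∧ p ∈ ℓ} with hS
  by_contra hcon
  rw [not_le] at hcon
  have h1 : 1 < S.encard := lt_trans (by norm_num) hcon
  obtain ⟨l1, l2, hl1, hl2, hne12⟩ := Set.one_lt_encard_iff.mp h1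
  have hnotsub : ¬ S ⊆ {l1, l2} := by
    intro hsub
    exact absurd (le_trans (Set.encard_mono hsub) (Set.encard_pair hne12).le)
      (not_le.mpr hcon)
  obtain ⟨l3, hl3, hl3'⟩ := Set.not_subset.mp hnotsub
  simp only [Set.mem_insert_iff, Set.mem_singleton_iff, not_or] at hl3'
  obtain ⟨hne13, hne23⟩ := hl3'
  -- unpack the three lines
  obtain ⟨⟨⟨v1, hv1, c1, rfl, hK1⟩, a1, ⟨ha1l, ha1K⟩, b1, ⟨hb1l, hb1K⟩, hab1⟩, hp1⟩ := hl1
  obtain ⟨⟨⟨v2, hv2, c2, rfl, hK2⟩, a2, ⟨ha2l, ha2K⟩, b2, ⟨hb2l, hb2K⟩, hab2⟩, hp2⟩ := hl2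
  obtain ⟨⟨⟨v3, hv3, c3, rfl, hK3⟩, a3, ⟨ha3l, ha3K⟩, b3, ⟨hb3l, hb3K⟩, hab3⟩, hp3⟩ := hl3
  simp only [Set.mem_setOf_eq] at hp1 hp2 hp3 ha1l hb1l ha2l hb2l ha3l hb3l
  have hind12 : LinearIndependent ℝ ![v1, v2] := indep_of_lines hv1 hv2 hp1 hp2 hne12
  have hind13 : LinearIndependent ℝ ![v1, v3] := indep_of_lines hv1 hv3 hp1 hp3 (fun h => hne13 h.symm)
  have hind23 : LinearIndependent ℝ ![v2, v3] := indep_of_lines hv2 hv3 hp2 hp3 (fun h => hne23 h.symm)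
  have hind21 : LinearIndependent ℝ ![v2, v1] := indep_of_lines hv2 hv1 hp2 hp1 hne12.symm
  have hind32 : LinearIndependent ℝ ![v3, v2] := indep_of_lines hv3 hv2 hp3 hp2 hne23
  have hind31 : LinearIndependent ℝ ![v3, v1] := indep_of_lines hv3 hv1 hp3 hp1 hne13
  -- write v3 in the basis v1 v2
  have hsp : Submodule.span ℝ (Set.range ![v1, v2]) = ⊤ :=
    hind12.span_eq_top_of_card_eq_finrank (by simp [finrank_E2])
  have hv3mem : v3 ∈ Submodule.span ℝ ({v1, v2} : Set E2) := by
    have : Set.range ![v1, v2] = {v1, v2} := by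
      ext x; simp [Matrix.range_cons, Matrix.range_empty, or_comm]
    rw [← this, hsp]; trivial
  rw [Submodule.mem_span_pair] at hv3mem
  obtain ⟨α, β, hαβ⟩ := hv3mem
  have hα0 : α ≠ 0 := by
    rintro rfl
    obtain ⟨h, h'⟩ := hind23.eq_zero_of_pair (x := v2) (y := v3) (s := β) (t := -1)
      (by rw [neg_one_smul, ← hαβ, zero_smul, zero_add]; abel)
    norm_num at h'
  have hβ0 : β ≠ 0 := by
    rintro rfl
    obtain ⟨h, h'⟩ := hind13.eq_zero_of_pair (x := v1) (y := v3) (s := α) (t := -1)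
      (by rw [neg_one_smul, ← hαβ, zero_smul, add_zero]; abel)
    norm_num at h'
  rcases hα0.lt_or_gt with hα | hα <;> rcases hβ0.lt_or_gt with hβ | hβ
  · -- α < 0, β < 0 : every point of K is on all three lines
    have hinner : ∀ x : E2, ⟪v3, x⟫ = α * ⟪v1, x⟫ + β * ⟪v2, x⟫ := by
      intro x
      rw [← hαβ, inner_add_left, real_inner_smul_left, real_inner_smul_left]
    have hc3 : c3 = α * c1 + β * c2 := by rw [← hp1, ← hp2, ← hp3, hinner]
    have key : ∀ x ∈ K, ⟪v1, x⟫ = c1 ∧ ⟪v2, x⟫ = c2 := by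
      intro x hx
      have e1 : ⟪v1, x⟫ ≤ c1 := hK1 hx
      have e2 : ⟪v2, x⟫ ≤ c2 := hK2 hx
      have e3 : ⟪v3, x⟫ ≤ c3 := hK3 hx
      rw [hinner, hc3] at e3
      constructor <;> nlinarith
    obtain ⟨ea1, ea2⟩ := key a1 ha1K
    obtain ⟨eb1, eb2⟩ := key b1 hb1K
    have hd : b1 - a1 = 0 := by
      apply orth_indep hind12
      · rw [inner_sub_right, ea1, eb1, sub_self]
      · rw [inner_sub_right, ea2, eb2, sub_self]
    exact hab1 (sub_eq_zero.mp hd).symm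
  · -- α < 0 < β : v2 = β⁻¹ • v3 + (-α/β) • v1
    refine key3 hK3 hK1 hp3 hp1 hp2 hind31 (α := β⁻¹) (β := -α/β)
      (by positivity) (div_pos (by linarith) hβ) ?_ ha2K hb2K ha2l hb2l hab2
    have : β • v2 = v3 - α • v1 := by rw [← hαβ]; abel
    have h2 := congrArg (fun z => β⁻¹ • z) this
    simp only [smul_smul, inv_mul_cancel₀ (ne_of_gt hβ), one_smul, smul_sub] at h2
    rw [h2, sub_eq_add_neg, ← neg_smul]
    congr 2
    field_simp
  · -- β < 0 < α : v1 = α⁻¹ • v3 + (-β/α) • v2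
    refine key3 hK3 hK2 hp3 hp2 hp1 hind32 (α := α⁻¹) (β := -β/α)
      (by positivity) (div_pos (by linarith) hα) ?_ ha1K hb1K ha1l hb1l hab1
    have : α • v1 = v3 - β • v2 := by rw [← hαβ]; abel
    have h2 := congrArg (fun z => α⁻¹ • z) this
    simp only [smul_smul, inv_mul_cancel₀ (ne_of_gt hα), one_smul, smul_sub] at h2
    rw [h2, sub_eq_add_neg, ← neg_smul]
    congr 2
    field_simp
  · -- 0 < α, 0 < β
    exact key3 hK1 hK2 hp1 hp2 hp3 hind12 hα hβ hαβ.symm ha3K hb3K ha3l hb3l hab3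


lemma face_subset (T : Finset E2) (f : E2 →L[ℝ] ℝ) (r : ℝ)
    (hT : ∀ s ∈ T, f s ≤ r) {x : E2}
    (hx : x ∈ convexHull ℝ (↑T : Set E2)) (hfx : f x = r) :
    x ∈ convexHull ℝ (↑(T.filter fun s => f s = r) : Set E2) := by
  rw [Finset.convexHull_eq] at hx ⊢
  obtain ⟨w, hw0, hw1, hwc⟩ := hx
  rw [Finset.centerMass_eq_of_sum_1 _ _ hw1] at hwc
  simp only [id_eq] at hwc
  have hfx' : ∑ y ∈ T, w y * f y = r := by
    have : f x = ∑ y ∈ T, w y * f y := by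
      rw [← hwc, map_sum]
      exact Finset.sum_congr rfl fun y _ => by rw [map_smul, smul_eq_mul]
    rw [← this, hfx]
  have hzero : ∀ y ∈ T, w y * (r - f y) = 0 := by
    have hsum : ∑ y ∈ T, w y * (r - f y) = 0 := by
      have : ∑ y ∈ T, w y * (r - f y) = r * (∑ y ∈ T, w y) - ∑ y ∈ T, w y * f y := by
        rw [Finset.mul_sum, ← Finset.sum_sub_distrib]
        exact Finset.sum_congr rfl fun y _ => by ring
      rw [this, hw1, hfx']; ring
    intro y hy
    exact (Finset.sum_eq_zero_iff_of_nonneg fun y hy =>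
      mul_nonneg (hw0 y hy) (sub_nonneg.mpr (hT y hy))).mp hsum y hy
  have hkey : ∀ y ∈ T, w y ≠ 0 → f y = r := by
    intro y hy hwy
    have := hzero y hy
    rcases mul_eq_zero.mp this with h | h
    · exact absurd h hwy
    · linarith [sub_eq_zero.mp h]
  refine ⟨w, fun y hy => hw0 y (Finset.mem_filter.mp hy).1, ?_, ?_⟩
  · rw [Finset.sum_filter_of_ne fun y hy hne => hkey y hy hne]
    exact hw1
  · rw [Finset.centerMass_eq_of_sum_1 _ _ (by
      rw [Finset.sum_filter_of_ne fun y hy hne => hkey y hy hne]; exact hw1)]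
    simp only [id_eq]
    rw [← hwc]
    exact Finset.sum_filter_of_ne fun y hy hne =>
      hkey y hy fun h => hne (by rw [h, zero_smul])

lemma pair_of_convexHull {T : Finset E2} {a b : E2}
    (ha : a ∈ convexHull ℝ (↑T : Set E2)) (hb : b ∈ convexHull ℝ (↑T : Set E2))
    (hab : a ≠ b) : ∃ s1 ∈ T, ∃ s2 ∈ T, s1 ≠ s2 := by
  by_contra hcon
  push_neg at hcon
  rcases T.eq_empty_or_nonempty with rfl | ⟨s0, hs0⟩
  · simp at ha
  · have hsub : (↑T : Set E2) ⊆ {s0} := by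
      intro y hy; exact hcon y hy s0 hs0
    have := convexHull_min hsub (convex_singleton (𝕜 := ℝ) s0)
    exact hab ((this ha).trans (this hb).symm)

lemma union_bound (g : E2 → Set (Set E2)) (hg : ∀ p, (g p).encard ≤ 2)
    (S : Finset E2) : (⋃ p ∈ S, g p).encard ≤ 2 * S.card := by
  classical
  induction S using Finset.induction_on with
  | empty => simp
  | @insert a s h ih =>
    rw [Finset.set_biUnion_insert, Finset.card_insert_of_notMem h]
    calc (g a ∪ ⋃ p ∈ s, g p).encard ≤ (g a).encard + (⋃ p ∈ s, g p).encard :=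
          Set.encard_union_le _ _
    _ ≤ 2 + 2 * s.card := add_le_add (hg a) ih
    _ = 2 * (↑(s.card + 1) : ℕ∞) := by push_cast; ring

/-- The `β`-hull is a convex polygon with at most `2n` edges: every
edge-supporting line passes through two sites, and each site lies on at most two
edge-supporting lines. -/
theorem betaHull_complexity
    (m : ℕ) (Pm : Fin m → Finset E2) (γ : Fin m → E2 → ℝ)
    (hγ : ∀ k, ∀ s ∈ Pm k, 0 < γ k s) (hsum : ∀ k, ∑ s ∈ Pm k, γ k s ≤ 1)
    (β : ℝ) (hβ : β ∈ Set.Icc (0 : ℝ) 1)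
    (Pall : Finset E2) (hPall : (Pall : Set E2) = ⋃ k : Fin m, (Pm k : Set E2)) :
    Convex ℝ (betaHull m Pm γ β) ∧
    (∀ ℓ : Set E2, IsEdgeLine (betaHull m Pm γ β) ℓ →
      ∃ a ∈ Pall, ∃ b ∈ Pall, a ≠ b ∧ a ∈ ℓ ∧ b ∈ ℓ) ∧
    (∀ p ∈ Pall,
      {ℓ : Set E2 | IsEdgeLine (betaHull m Pm γ β) ℓ ∧ p ∈ ℓ}.encard ≤ 2) ∧
    {ℓ : Set E2 | IsEdgeLine (betaHull m Pm γ β) ℓ}.encard ≤ 2 * Pall.card := by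
  set K := betaHull m Pm γ β with hKdef
  have hconv : Convex ℝ K := by
    apply convex_sInter
    intro C hC
    exact hC.1
  set 𝔽 : Finset (Finset E2) :=
    Pall.powerset.filter (fun T => IsBetaDense m Pm γ β (convexHull ℝ (↑T : Set E2)))
    with h𝔽def
  have hTC : ∀ C : Set E2, IsBetaDense m Pm γ β C →
      (Pall.filter (· ∈ C)) ∈ 𝔽 ∧
      convexHull ℝ (↑(Pall.filter (· ∈ C)) : Set E2) ⊆ C := by
    intro C hC
    have hsub : (↑(Pall.filter (· ∈ C)) : Set E2) ⊆ C := by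
      intro y hy
      rw [Finset.mem_coe, Finset.mem_filter] at hy
      exact hy.2
    have hhull : convexHull ℝ (↑(Pall.filter (· ∈ C)) : Set E2) ⊆ C :=
      convexHull_min hsub hC.1
    refine ⟨Finset.mem_filter.mpr ⟨Finset.mem_powerset.mpr (Finset.filter_subset _ _),
      ⟨convex_convexHull ℝ _, ?_⟩⟩, hhull⟩
    intro k
    refine le_trans (hC.2 k) (Finset.sum_le_sum_of_subset_of_nonneg ?_ ?_)
    · intro s hs
      rw [Finset.mem_filter] at hs ⊢
      refine ⟨hs.1, ?_⟩
      apply subset_convexHull ℝ _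
      rw [Finset.mem_coe, Finset.mem_filter]
      have hsP : s ∈ Pall := by
        rw [← Finset.mem_coe, hPall]
        exact Set.mem_iUnion.mpr ⟨k, Finset.mem_coe.mpr hs.1⟩
      exact ⟨hsP, hs.2⟩
    · intro s hs _
      exact (hγ k s (Finset.mem_filter.mp hs).1).le
  have hK_sub : ∀ T ∈ 𝔽, K ⊆ convexHull ℝ (↑T : Set E2) := by
    intro T hT
    exact Set.sInter_subset_of_mem (Finset.mem_filter.mp hT).2
  have h2 : ∀ ℓ : Set E2, IsEdgeLine K ℓ →
      ∃ a ∈ Pall, ∃ b ∈ Pall, a ≠ b ∧ a ∈ ℓ ∧ b ∈ ℓ := by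
    intro ℓ hedge
    obtain ⟨⟨v, hv, c, hℓ, hKH⟩, a, ⟨haℓ, haK⟩, b, ⟨hbℓ, hbK⟩, hab⟩ := hedge
    subst hℓ
    simp only [Set.mem_setOf_eq] at haℓ hbℓ
    set x : E2 := (1/2 : ℝ) • a + (1/2 : ℝ) • b with hxdef
    have hxK : x ∈ K := hconv haK hbK (by norm_num) (by norm_num) (by norm_num)
    have hxc : ⟪v, x⟫ = c := by
      rw [hxdef, inner_add_right, real_inner_smul_right, real_inner_smul_right, haℓ, hbℓ]
      ring
    have h𝔽ne : 𝔽.Nonempty := by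
      by_contra hne
      rw [Finset.not_nonempty_iff_eq_empty] at hne
      have hempty : {C : Set E2 | IsBetaDense m Pm γ β C} = ∅ := by
        ext C
        simp only [Set.mem_setOf_eq, Set.mem_empty_iff_false, iff_false]
        intro hC
        have hmem := (hTC C hC).1
        rw [hne] at hmem
        exact absurd hmem (Finset.notMem_empty _)
      have huniv : K = Set.univ := by
        rw [hKdef, betaHull, hempty, Set.sInter_empty]
      have hy : x + (⟪v, v⟫)⁻¹ • v ∈ K := by rw [huniv]; trivial
      have hle := hKH hy
      simp only [Set.mem_setOf_eq] at hle
      rw [inner_add_right, real_inner_smul_right, hxc,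
        inv_mul_cancel₀ (inner_self_ne_zero.mpr hv)] at hle
      linarith
    have hexT : ∃ T ∈ 𝔽, x ∉ interior (convexHull ℝ (↑T : Set E2)) := by
      by_contra hcon
      push_neg at hcon
      set U : Set E2 := ⋂ T ∈ 𝔽, interior (convexHull ℝ (↑T : Set E2)) with hUdef
      have hUopen : IsOpen U := isOpen_biInter_finset (fun T _ => isOpen_interior)
      have hxU : x ∈ U := Set.mem_iInter₂.mpr (fun T hT => hcon T hT)
      have hUK : U ⊆ K := by
        intro y hy
        apply Set.mem_sInter.mpr
        intro C hC
        obtain ⟨hTC1, hTC2⟩ := hTC C hC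
        exact hTC2 (interior_subset (Set.mem_iInter₂.mp hy _ hTC1))
      obtain ⟨ε, hε, hball⟩ := Metric.isOpen_iff.mp hUopen x hxU
      have hvnorm : 0 < ‖v‖ := norm_pos_iff.mpr hv
      set t : ℝ := ε / (2 * ‖v‖) with htdef
      have htpos : 0 < t := by positivity
      have hyball : x + t • v ∈ Metric.ball x ε := by
        rw [Metric.mem_ball, dist_eq_norm, add_sub_cancel_left, norm_smul,
          Real.norm_eq_abs, abs_of_pos htpos]
        have : t * ‖v‖ = ε / 2 := by
          rw [htdef]
          field_simp
        rw [this]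
        linarith
      have hyK : x + t • v ∈ K := hUK (hball hyball)
      have hle := hKH hyK
      simp only [Set.mem_setOf_eq] at hle
      rw [inner_add_right, real_inner_smul_right, hxc, real_inner_self_eq_norm_sq] at hle
      nlinarith [mul_pos htpos (pow_pos hvnorm 2)]
    obtain ⟨T, hT𝔽, hxint⟩ := hexT
    have hTP : T ⊆ Pall := Finset.mem_powerset.mp (Finset.mem_filter.mp hT𝔽).1
    have hKT : K ⊆ convexHull ℝ (↑T : Set E2) := hK_sub T hT𝔽
    have haT : a ∈ convexHull ℝ (↑T : Set E2) := hKT haK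
    have hbT : b ∈ convexHull ℝ (↑T : Set E2) := hKT hbK
    have hconvT : Convex ℝ (convexHull ℝ (↑T : Set E2)) := convex_convexHull ℝ _
    by_cases hint : (interior (convexHull ℝ (↑T : Set E2))).Nonempty
    · obtain ⟨f, hf⟩ :=
        geometric_hahn_banach_open_point hconvT.interior isOpen_interior hxint
      obtain ⟨z, hz⟩ := hint
      have hfz : f z < f x := hf z hz
      have hle : ∀ y ∈ convexHull ℝ (↑T : Set E2), f y ≤ f x := by
        intro y hy
        by_contra hlt
        push_neg at hlt
        have hyz : 0 < f y - f z := by linarith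
        set s : ℝ := min 1 ((f y - f x) / (2 * (f y - f z))) with hsdef
        have hs0 : 0 < s := lt_min one_pos (div_pos (by linarith) (by linarith))
        have hs1 : s ≤ 1 := min_le_left _ _
        have hmem : y + s • (z - y) ∈ interior (convexHull ℝ (↑T : Set E2)) :=
          hconvT.add_smul_sub_mem_interior hy hz ⟨hs0, hs1⟩
        have hlt2 := hf _ hmem
        rw [map_add, map_smul, map_sub, smul_eq_mul] at hlt2
        have hsle : s ≤ (f y - f x) / (2 * (f y - f z)) := min_le_right _ _
        have hkey : s * (2 * (f y - f z)) ≤ f y - f x :=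
          (le_div_iff₀ (by linarith : (0:ℝ) < 2 * (f y - f z))).mp hsle
        nlinarith
      have hfab : f a = f x ∧ f b = f x := by
        have h1 : f a ≤ f x := hle a haT
        have h2 : f b ≤ f x := hle b hbT
        have h3 : f x = (1/2) * f a + (1/2) * f b := by
          rw [hxdef, map_add, map_smul, map_smul, smul_eq_mul, smul_eq_mul]
        constructor <;> linarith
      have hker : LinearMap.ker (f : E2 →ₗ[ℝ] ℝ) ≠ ⊤ := by
        intro h
        have hmem : x - z ∈ LinearMap.ker (f : E2 →ₗ[ℝ] ℝ) := by rw [h]; trivial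
        rw [LinearMap.mem_ker, ContinuousLinearMap.coe_coe, map_sub] at hmem
        linarith
      set T' := T.filter (fun s => f s = f x) with hT'def
      have haT' : a ∈ convexHull ℝ (↑T' : Set E2) :=
        face_subset T f (f x) (fun s hs => hle s (subset_convexHull ℝ _ hs)) haT hfab.1
      have hbT' : b ∈ convexHull ℝ (↑T' : Set E2) :=
        face_subset T f (f x) (fun s hs => hle s (subset_convexHull ℝ _ hs)) hbT hfab.2
      obtain ⟨s1, hs1, s2, hs2, hne⟩ := pair_of_convexHull haT' hbT' hab
      have hon : ∀ s ∈ T', ⟪v, s⟫ = c := by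
        intro s hs
        have hfs : f s = f x := (Finset.mem_filter.mp hs).2
        have hmem1 : s - a ∈ LinearMap.ker (f : E2 →ₗ[ℝ] ℝ) := by
          rw [LinearMap.mem_ker, ContinuousLinearMap.coe_coe, map_sub, hfs, hfab.1, sub_self]
        have hmem2 : b - a ∈ LinearMap.ker (f : E2 →ₗ[ℝ] ℝ) := by
          rw [LinearMap.mem_ker, ContinuousLinearMap.coe_coe, map_sub, hfab.2, hfab.1, sub_self]
        have hd0 : b - a ≠ 0 := sub_ne_zero.mpr (Ne.symm hab)
        obtain ⟨t', hts⟩ := aux_span (LinearMap.ker (f : E2 →ₗ[ℝ] ℝ)) hker hd0 hmem2 hmem1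
        have hseq : s = a + t' • (b - a) := by rw [← hts]; abel
        rw [hseq, inner_add_right, real_inner_smul_right, inner_sub_right, haℓ, hbℓ]
        ring
      exact ⟨s1, hTP (Finset.mem_filter.mp hs1).1, s2, hTP (Finset.mem_filter.mp hs2).1,
        hne, hon s1 hs1, hon s2 hs2⟩
    · rw [Set.not_nonempty_iff_eq_empty] at hint
      have hspan : affineSpan ℝ ((↑T : Set E2)) ≠ ⊤ := by
        intro h
        have h2 : affineSpan ℝ (convexHull ℝ (↑T : Set E2)) = ⊤ := by
          rw [affineSpan_convexHull]; exact h
        have := hconvT.interior_nonempty_iff_affineSpan_eq_top.mpr h2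
        rw [hint] at this
        exact Set.not_nonempty_empty this
      set W := (affineSpan ℝ ((↑T : Set E2))).direction with hWdef
      have hmemA : ∀ y ∈ convexHull ℝ (↑T : Set E2), y ∈ affineSpan ℝ ((↑T : Set E2)) := by
        intro y hy
        have h4 := subset_affineSpan ℝ (convexHull ℝ (↑T : Set E2)) hy
        rwa [affineSpan_convexHull] at h4
      have hWne : W ≠ ⊤ := by
        intro h
        apply hspan
        have hne' : ((affineSpan ℝ ((↑T : Set E2)) : AffineSubspace ℝ E2) : Set E2).Nonempty :=
          ⟨a, hmemA a haT⟩
        rw [← AffineSubspace.direction_eq_top_iff_of_nonempty hne']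
        exact h
      have hmemW : ∀ y ∈ convexHull ℝ (↑T : Set E2), y - a ∈ W := by
        intro y hy
        have h3 := AffineSubspace.vsub_mem_direction (hmemA y hy) (hmemA a haT)
        simpa [vsub_eq_sub] using h3
      have hd0 : b - a ≠ 0 := sub_ne_zero.mpr (Ne.symm hab)
      have hdW : b - a ∈ W := hmemW b hbT
      obtain ⟨s1, hs1, s2, hs2, hne⟩ := pair_of_convexHull haT hbT hab
      have hon : ∀ s ∈ T, ⟪v, s⟫ = c := by
        intro s hs
        have hsW : s - a ∈ W := hmemW s (subset_convexHull ℝ _ hs)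
        obtain ⟨t', hts⟩ := aux_span W hWne hd0 hdW hsW
        have hseq : s = a + t' • (b - a) := by rw [← hts]; abel
        rw [hseq, inner_add_right, real_inner_smul_right, inner_sub_right, haℓ, hbℓ]
        ring
      exact ⟨s1, hTP hs1, s2, hTP hs2, hne, hon s1 hs1, hon s2 hs2⟩
  refine ⟨hconv, h2, fun p _ => atmost2 K p, ?_⟩
  have hcov : {ℓ : Set E2 | IsEdgeLine K ℓ} ⊆
      ⋃ p ∈ Pall, {ℓ : Set E2 | IsEdgeLine K ℓ ∧ p ∈ ℓ} := by
    intro ℓ hℓ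
    obtain ⟨a, haP, b, _, _, haℓ, _⟩ := h2 ℓ hℓ
    exact Set.mem_biUnion haP ⟨hℓ, haℓ⟩
  calc {ℓ : Set E2 | IsEdgeLine K ℓ}.encard
      ≤ (⋃ p ∈ Pall, {ℓ : Set E2 | IsEdgeLine K ℓ ∧ p ∈ ℓ}).encard :=
        Set.encard_mono hcov
    _ ≤ 2 * Pall.card := union_bound _ (fun p => atmost2 K p) Pall
end
end
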